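/- Let Y be a locally path-connected space and f : Y → X a function such that f ∘ g is continuous for every continuous map g : Z → Y from an arc-hedgehog Z. Then f is continuous. -/

import Mathlib

open unitInterval Topology

set_option linter.unnecessarySimpa false

universe u v w

/-- `p : E → B` is an arc-covering: unique lifting of paths given the initial point. -/
def IsArcCovering {E : Type*} {B : Type*} [TopologicalSpace E] [TopologicalSpace B]
    (p : C(E, B)) : Prop :=
  ∀ (e₀ : E) (f : C(I, B)), f 0 = p e₀ →
    ∃! g : C(I, E), p.comp g = f ∧ g 0 = e₀

/-- The relation identifying the wedge points of a wedge of copies of `(A, a₀)` indexed by `S`. -/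
def wedgeRel (S A : Type*) (a₀ : A) (x y : S × A) : Prop :=
  x = y ∨ (x.2 = a₀ ∧ y.2 = a₀)

/-- The wedge (one-point union) of copies of `(A, a₀)` indexed by `S`. -/
def Wedge (S A : Type*) (a₀ : A) : Type _ :=
  Quot (wedgeRel S A a₀)

/-- The topology of a directed wedge: a set is open iff its trace on each copy of `A`
is open, and if it contains the wedge point then it contains all copies of `A`
beyond some index. -/
instance Wedge.instTopologicalSpace (S A : Type*) (a₀ : A) [Preorder S]
    [IsDirected S (· ≤ ·)] [TopologicalSpace A] : TopologicalSpace (Wedge S A a₀) where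
  IsOpen U := (∀ s : S, IsOpen {a : A | Quot.mk (wedgeRel S A a₀) (s, a) ∈ U}) ∧
    ((∃ s : S, Quot.mk (wedgeRel S A a₀) (s, a₀) ∈ U) →
      ∃ t : S, ∀ s : S, t < s → ∀ a : A, Quot.mk (wedgeRel S A a₀) (s, a) ∈ U)
  isOpen_univ := by
    refine ⟨fun s => ?_, fun h => ?_⟩
    · exact isOpen_univ
    · obtain ⟨s, -⟩ := h
      exact ⟨s, fun _ _ _ => trivial⟩
  isOpen_inter := by
    rintro U V ⟨hU1, hU2⟩ ⟨hV1, hV2⟩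
    refine ⟨fun s => (hU1 s).inter (hV1 s), fun h => ?_⟩
    obtain ⟨tU, htU⟩ := hU2 ⟨h.choose, h.choose_spec.1⟩
    obtain ⟨tV, htV⟩ := hV2 ⟨h.choose, h.choose_spec.2⟩
    obtain ⟨t, ht1, ht2⟩ := directed_of (· ≤ ·) tU tV
    exact ⟨t, fun s hs a => ⟨htU s (lt_of_le_of_lt ht1 hs) a, htV s (lt_of_le_of_lt ht2 hs) a⟩⟩
  isOpen_sUnion := by
    intro C hC
    constructor
    · intro s
      have : {a : A | Quot.mk (wedgeRel S A a₀) (s, a) ∈ ⋃₀ C} =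
          ⋃ U ∈ C, {a : A | Quot.mk (wedgeRel S A a₀) (s, a) ∈ U} := by
        ext a
        simp only [Set.mem_setOf_eq, Set.mem_sUnion, Set.mem_iUnion, exists_prop]
        exact Iff.rfl
      rw [this]
      exact isOpen_biUnion fun U hU => (hC U hU).1 s
    · rintro ⟨s, hs⟩
      obtain ⟨U, hUC, hsU⟩ := hs
      obtain ⟨t, ht⟩ := (hC U hUC).2 ⟨s, hsU⟩
      exact ⟨t, fun s' hs' a => ⟨U, hUC, ht s' hs' a⟩⟩

/-- An arc-hedgehog over a directed set `S`: the directed wedge of copies of `([0,1], 0)`. -/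
def ArcHedgehog (S : Type*) : Type _ := Wedge S I 0

instance (S : Type*) [Preorder S] [IsDirected S (· ≤ ·)] : TopologicalSpace (ArcHedgehog S) :=
  Wedge.instTopologicalSpace S I 0

/-- `p` is an arc-hedgehog covering: maps from arc-hedgehogs lift uniquely. -/
def IsArcHedgehogCovering {E : Type*} {B : Type*} [TopologicalSpace E] [TopologicalSpace B]
    (p : C(E, B)) : Prop :=
  ∀ (S : Type u) [Preorder S] [IsDirected S (· ≤ ·)],
    ∀ (e₀ : E) (f : C(ArcHedgehog S, B)) (z₀ : ArcHedgehog S), f z₀ = p e₀ →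
      ∃! g : C(ArcHedgehog S, E), p.comp g = f ∧ g z₀ = e₀

/-- The closed unit `2`-disk. -/
noncomputable def Disk : Type := Metric.closedBall (0 : EuclideanSpace ℝ (Fin 2)) 1

noncomputable instance : TopologicalSpace Disk := by unfold Disk; infer_instance

/-- The center of the disk. -/
noncomputable def Disk.center : Disk := ⟨0, by simp⟩

/-- A disk-hedgehog over a directed set `S`: the directed wedge of copies of the pointed disk. -/
def DiskHedgehog (S : Type*) : Type _ := Wedge S Disk Disk.center

noncomputable instance (S : Type*) [Preorder S] [IsDirected S (· ≤ ·)] : TopologicalSpace (DiskHedgehog S) :=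
  Wedge.instTopologicalSpace S Disk Disk.center

/-- `p` is a disk-hedgehog covering: maps from disk-hedgehogs lift uniquely. -/
def IsDiskHedgehogCovering {E : Type*} {B : Type*} [TopologicalSpace E] [TopologicalSpace B]
    (p : C(E, B)) : Prop :=
  ∀ (S : Type u) [Preorder S] [IsDirected S (· ≤ ·)],
    ∀ (e₀ : E) (f : C(DiskHedgehog S, B)) (z₀ : DiskHedgehog S), f z₀ = p e₀ →
      ∃! g : C(DiskHedgehog S, E), p.comp g = f ∧ g z₀ = e₀

/-- `p` is a disk-covering: maps from the closed `2`-disk lift uniquely. -/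
def IsDiskCovering {E : Type*} {B : Type*} [TopologicalSpace E] [TopologicalSpace B]
    (p : C(E, B)) : Prop :=
  ∀ (e₀ : E) (f : C(Disk, B)) (d₀ : Disk), f d₀ = p e₀ →
    ∃! g : C(Disk, E), p.comp g = f ∧ g d₀ = e₀

/-- Path components of preimages of neighborhoods form a neighborhood basis of the
total space. -/
def HedgehogBasisCondition {E : Type*} {B : Type*} [TopologicalSpace E] [TopologicalSpace B]
    (p : C(E, B)) : Prop :=
  ∀ (e₀ : E) (U : Set E), IsOpen U → e₀ ∈ U →
    ∃ V ∈ 𝓝 (p e₀), {y : E | JoinedIn (p ⁻¹' V) e₀ y} ⊆ U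

/-- The monodromy relation on loops at `b₀`: two loops are identified iff any two of
their lifts starting at the same point end at the same point. -/
def MonodromyRel {E : Type*} {B : Type*} [TopologicalSpace E] [TopologicalSpace B]
    (p : C(E, B)) (b₀ : B) (α β : Path b₀ b₀) : Prop :=
  ∀ g h : C(I, E), (∀ t, p (g t) = α t) → (∀ t, p (h t) = β t) →
    g 0 = h 0 → g 1 = h 1

/-- `p` is regular: for each loop in `B`, all lifts are loops or all lifts are non-loops. -/
def IsRegularCovering {E : Type*} {B : Type*} [TopologicalSpace E] [TopologicalSpace B]
    (p : C(E, B)) : Prop :=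
  ∀ (b : B) (α : Path b b) (g h : C(I, E)),
    (∀ t, p (g t) = α t) → (∀ t, p (h t) = α t) → g 0 = g 1 → h 0 = h 1

/-- Auxiliary: path-connected neighborhoods of a point. -/
structure NbhdSys (Y : Type v) [TopologicalSpace Y] (y₀ : Y) : Type v where
  set : Set Y
  mem_nhds' : set ∈ 𝓝 y₀
  pathConnected : IsPathConnected set

instance (Y : Type v) [TopologicalSpace Y] (y₀ : Y) : Preorder (NbhdSys Y y₀) where
  le V W := W.set ⊆ V.set
  lt V W := W.set ⊆ V.set ∧ ¬V.set ⊆ W.set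
  le_refl V := Set.Subset.rfl
  le_trans A B C h1 h2 := Set.Subset.trans h2 h1
  lt_iff_le_not_ge _ _ := Iff.rfl

/-- a function from a locally path-connected space is continuous provided
its composition with every map from an arc-hedgehog is continuous. -/
theorem continuous_of_continuous_comp_hedgehog {Y X : Type u} [TopologicalSpace Y]
    [TopologicalSpace X] [LocallyPathConnectedSpace Y] (f : Y → X)
    (h : ∀ (S : Type u) [Preorder S] [IsDirected S (· ≤ ·)]
      (g : C(ArcHedgehog S, Y)), Continuous (f ∘ g)) :
    Continuous f := by
  rw [continuous_iff_continuousAt]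
  intro y₀
  by_contra hcont
  -- extract a bad open neighborhood U of f y₀
  rw [ContinuousAt, Filter.tendsto_def] at hcont
  push_neg at hcont
  obtain ⟨U, hU, hUnot⟩ := hcont
  let S₀ := NbhdSys Y y₀
  haveI hdir₀ : IsDirected S₀ (· ≤ ·) := by
    constructor
    intro V W
    obtain ⟨Z, ⟨hZ, hZpc⟩, hZsub⟩ := (path_connected_basis y₀).mem_iff.mp
      (Filter.inter_mem V.mem_nhds' W.mem_nhds')
    exact ⟨⟨Z, hZ, hZpc⟩, fun x hx => (hZsub hx).1, fun x hx => (hZsub hx).2⟩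
  let S := S₀ × ℕ
  haveI : IsDirected S (· ≤ ·) := by
    constructor
    rintro ⟨V, n⟩ ⟨W, m⟩
    obtain ⟨Z, hZ1, hZ2⟩ := directed_of (· ≤ ·) V W
    exact ⟨⟨Z, max n m⟩, ⟨hZ1, le_max_left n m⟩, ⟨hZ2, le_max_right n m⟩⟩
  -- for each s, pick a point of s.1 outside f ⁻¹' U and a path to it
  have hbad : ∀ s : S, ∃ y ∈ s.1.set, f y ∉ U := by
    intro s
    by_contra hb
    push_neg at hb
    exact hUnot (Filter.mem_of_superset s.1.mem_nhds' hb)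
  choose ys hysmem hysU using hbad
  have hy₀mem : ∀ s : S, y₀ ∈ s.1.set := fun s => mem_of_mem_nhds s.1.mem_nhds'
  have hjoin : ∀ s : S, JoinedIn s.1.set y₀ (ys s) :=
    fun s => s.1.pathConnected.joinedIn y₀ (hy₀mem s) (ys s) (hysmem s)
  let γ : ∀ s : S, Path y₀ (ys s) := fun s => (hjoin s).somePath
  have hγmem : ∀ (s : S) (t : I), γ s t ∈ s.1.set := fun s => (hjoin s).somePath_mem
  -- define the map g from the arc-hedgehog
  let g₀ : ArcHedgehog S → Y := Quot.lift (fun x : S × I => γ x.1 x.2) (by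
    rintro ⟨s, a⟩ ⟨t, b⟩ (heq | ⟨ha, hb⟩)
    · rw [heq]
    · simp only at ha hb ⊢
      rw [ha, hb, (γ s).source, (γ t).source])
  have hg₀cont : Continuous g₀ := by
    rw [continuous_def]
    intro W hW
    constructor
    · intro s
      have : {a : I | Quot.mk (wedgeRel S I 0) (s, a) ∈ g₀ ⁻¹' W} = (γ s) ⁻¹' W := rfl
      show IsOpen ((γ s) ⁻¹' W)
      exact hW.preimage (γ s).continuous
    · rintro ⟨s, hs⟩
      have hy₀W : y₀ ∈ W := by
        have : g₀ (Quot.mk (wedgeRel S I 0) (s, 0)) = y₀ := (γ s).source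
        rw [← this]; exact hs
      obtain ⟨V₀, ⟨hV₀, hV₀pc⟩, hV₀sub⟩ := (path_connected_basis y₀).mem_iff.mp
        (hW.mem_nhds hy₀W)
      refine ⟨(⟨⟨V₀, hV₀, hV₀pc⟩, 0⟩ : S), fun s' hs' a => ?_⟩
      have hsub : s'.1.set ⊆ V₀ := hs'.le.1
      exact hV₀sub (hsub (hγmem s' a))
  let g : C(ArcHedgehog S, Y) := ⟨g₀, hg₀cont⟩
  -- apply the hypothesis
  have hfg := h S g
  obtain ⟨U', hU'sub, hU'o, hfU'⟩ := mem_nhds_iff.mp hU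
  have hopen : IsOpen ((f ∘ g) ⁻¹' U') := hU'o.preimage hfg
  obtain ⟨hop1, hop2⟩ := hopen
  -- the wedge point maps into U'
  obtain ⟨s₁, -⟩ : ∃ s₁ : S, True := by
    obtain ⟨V, ⟨hV, hVpc⟩⟩ := (path_connected_basis y₀).ex_mem
    exact ⟨⟨⟨V, hV, hVpc⟩, 0⟩, trivial⟩
  have hwedge : Quot.mk (wedgeRel S I 0) (s₁, 0) ∈ (f ∘ g) ⁻¹' U' := by
    have : g (Quot.mk (wedgeRel S I 0) (s₁, 0)) = y₀ := (γ s₁).source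
    show f (g (Quot.mk (wedgeRel S I 0) (s₁, 0))) ∈ U'; rw [this]
    exact hfU'
  obtain ⟨t, ht⟩ := hop2 ⟨s₁, hwedge⟩
  -- choose s strictly above t
  have htlt : t < (⟨t.1, t.2 + 1⟩ : S) := by
    constructor
    · exact ⟨le_refl _, Nat.le_succ _⟩
    · rintro ⟨-, hle⟩
      exact Nat.not_succ_le_self t.2 hle
  have hend := ht ⟨t.1, t.2 + 1⟩ htlt 1
  have : g (Quot.mk (wedgeRel S I 0) (⟨t.1, t.2 + 1⟩, 1)) = ys ⟨t.1, t.2 + 1⟩ :=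
    (γ ⟨t.1, t.2 + 1⟩).target
  change f (g (Quot.mk (wedgeRel S I 0) (⟨t.1, t.2 + 1⟩, 1))) ∈ U' at hend; rw [this] at hend
  exact hysU ⟨t.1, t.2 + 1⟩ (hU'sub hend)
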